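/- If m is a positive integer such that m + 1 is composite, then H_m(1) = 1 and H_m(n) = 0 for all integers n > 1. -/

import Mathlib

open Finset

/-- The Schemmel totient function: `L m 0 = 0`, `L m 1 = 1`, and for `n > 1`,
`L m n = ∏ p^(α-1) (p - m)` over the canonical factorization of `n` if every
prime divisor of `n` exceeds `m`, and `0` otherwise. -/
def L (m n : ℕ) : ℕ :=
  if n ≤ 1 then n
  else if ∀ p ∈ n.primeFactors, m < p then
    ∏ p ∈ n.primeFactors, p ^ (n.factorization p - 1) * (p - m)
  else 0

/-- `R m n` is the least positive `k` with `L_m^{(k)}(n) ∈ {0, 1}`. -/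
noncomputable def R (m n : ℕ) : ℕ :=
  sInf {k | 0 < k ∧ ((L m)^[k] n = 0 ∨ (L m)^[k] n = 1)}

/-- `H m n = L_m^{(R_m(n))}(n)`. -/
noncomputable def H (m n : ℕ) : ℕ := (L m)^[R m n] n

/-- `D m 1 = 0` and `D m n = ∑_{i=1}^{R_m(n)} L_m^{(i)}(n)` for `n > 1`. -/
noncomputable def D (m n : ℕ) : ℕ :=
  if n = 1 then 0 else ∑ i ∈ Finset.Icc 1 (R m n), (L m)^[i] n

lemma L_zero (m : ℕ) : L m 0 = 0 := by simp [L]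

lemma L_one (m : ℕ) : L m 1 = 1 := by simp [L]

lemma L_dichot (m : ℕ) (hm : 0 < m) (hcomp : ¬ (m + 1).Prime) {n : ℕ} (hn : 1 < n) :
    L m n = 0 ∨ (1 < L m n ∧ L m n < n) := by
  rw [L, if_neg (by omega)]
  split_ifs with h
  · right
    have hn0 : n ≠ 0 := by omega
    have hne : n.primeFactors.Nonempty := Nat.nonempty_primeFactors.2 hn
    have hfac : ∀ p ∈ n.primeFactors, 2 ≤ p - m := by
      intro p hp
      have hpp := Nat.prime_of_mem_primeFactors hp
      have hlt := h p hp
      have : p ≠ m + 1 := fun e => hcomp (e ▸ hpp)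
      omega
    constructor
    · obtain ⟨q, hq⟩ := hne
      have hle : q ^ (n.factorization q - 1) * (q - m) ≤
          ∏ p ∈ n.primeFactors, p ^ (n.factorization p - 1) * (p - m) := by
        rw [← Finset.mul_prod_erase _ _ hq]
        refine Nat.le_mul_of_pos_right _ (Finset.prod_pos (fun p hp => ?_))
        have hp' := Finset.mem_of_mem_erase hp
        have h1 : 0 < p ^ (n.factorization p - 1) :=
          Nat.pow_pos (Nat.prime_of_mem_primeFactors hp').pos
        have h2 := hfac p hp'
        exact Nat.mul_pos h1 (by omega)
      have h1 : 1 ≤ q ^ (n.factorization q - 1) :=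
        Nat.one_le_pow _ _ (Nat.prime_of_mem_primeFactors hq).pos
      have h2 := hfac q hq
      calc 1 < 1 * 2 := by norm_num
        _ ≤ q ^ (n.factorization q - 1) * (q - m) := Nat.mul_le_mul h1 h2
        _ ≤ _ := hle
    · have key : ∀ p ∈ n.primeFactors,
          p ^ (n.factorization p - 1) * (p - m) < p ^ n.factorization p := by
        intro p hp
        have hpp := Nat.prime_of_mem_primeFactors hp
        have hα : 1 ≤ n.factorization p := (Nat.Prime.factorization_pos_of_dvd hpp hn0
          (Nat.dvd_of_mem_primeFactors hp))
        have : p ^ n.factorization p = p ^ (n.factorization p - 1) * p := by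
          rw [← pow_succ]; congr 1; omega
        rw [this]
        have hpos : 0 < p ^ (n.factorization p - 1) := Nat.pow_pos hpp.pos
        have h2 := hfac p hp
        exact Nat.mul_lt_mul_of_le_of_lt (le_refl _) (by omega) hpos
      calc ∏ p ∈ n.primeFactors, p ^ (n.factorization p - 1) * (p - m)
          < ∏ p ∈ n.primeFactors, p ^ n.factorization p := by
            refine Finset.prod_lt_prod_of_nonempty (fun p hp => ?_) key hne
            have h1 : 1 ≤ p ^ (n.factorization p - 1) :=
              Nat.one_le_pow _ _ (Nat.prime_of_mem_primeFactors hp).pos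
            have h2 := hfac p hp
            positivity
        _ = n := by
            rw [Nat.prod_primeFactors_prod_factorization]
            exact Nat.factorization_prod_pow_eq_self hn0
  · left; rfl

lemma iter_dichot (m : ℕ) (hm : 0 < m) (hcomp : ¬ (m + 1).Prime) {n : ℕ} (hn : 1 < n) :
    ∀ k, (L m)^[k] n = 0 ∨ 1 < (L m)^[k] n := by
  intro k
  induction k with
  | zero => right; simpa using hn
  | succ k ih =>
    rw [Function.iterate_succ_apply']
    rcases ih with h | h
    · left; rw [h, L_zero]
    · rcases L_dichot m hm hcomp h with h' | ⟨h1, _⟩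
      · left; exact h'
      · right; exact h1

lemma exists_iter_zero (m : ℕ) (hm : 0 < m) (hcomp : ¬ (m + 1).Prime) :
    ∀ n : ℕ, 1 < n → ∃ k, 0 < k ∧ (L m)^[k] n = 0 := by
  intro n
  induction n using Nat.strong_induction_on with
  | _ n ih =>
    intro hn
    rcases L_dichot m hm hcomp hn with h | ⟨h1, h2⟩
    · exact ⟨1, one_pos, by simpa using h⟩
    · obtain ⟨k, hk, hk0⟩ := ih (L m n) h2 h1
      exact ⟨k + 1, Nat.succ_pos _, by rwa [Function.iterate_succ_apply]⟩

theorem H_of_composite_succ (m : ℕ) (hm : 0 < m) (hcomp : ¬ (m + 1).Prime)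
    (h1 : 1 < m + 1) : H m 1 = 1 ∧ ∀ n : ℕ, 1 < n → H m n = 0 := by
  constructor
  · have : ∀ k, (L m)^[k] 1 = 1 := fun k => Function.iterate_fixed (L_one m) k
    simp [H, this]
  · intro n hn
    obtain ⟨k, hk, hk0⟩ := exists_iter_zero m hm hcomp n hn
    have hne : {k | 0 < k ∧ ((L m)^[k] n = 0 ∨ (L m)^[k] n = 1)}.Nonempty :=
      ⟨k, hk, Or.inl hk0⟩
    have hmem := Nat.sInf_mem hne
    rcases hmem.2 with h | h
    · exact h
    · rcases iter_dichot m hm hcomp hn (R m n) with h' | h'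
      · exact h'
      · simp only [H, R] at h h' ⊢; omega
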